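/- For a 4-leaf CFN tree with topology ab|cd and flip probabilities p_a = p_c = ρ, p_b = p_d = p_m = ρ³, any site pattern other than (i) constant, (ii) singleton on a, (iii) singleton on c, or (iv) the split {a,c}|{b,d}, has probability O(ρ³) as ρ → 0. -/
import Mathlib


open Filter Asymptotics

noncomputable def cfnFlip (p : ℝ) (b : Bool) : ℝ := if b then p else 1 - p

/-- CFN probability of leaf pattern `s` on the quartet topology `ab|cd` (leaf slots
`a,b,c,d = 0,1,2,3`, grouped `{0,1} | {2,3}`), with pendant flip probabilities
`p 0, ..., p 3`, middle-edge flip probability `p 4`, and a uniform root. -/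
noncomputable def cfnSiteProb (p : Fin 5 → ℝ) (s : Fin 4 → Bool) : ℝ :=
  (1 / 2) * ∑ u : Bool, ∑ v : Bool,
    cfnFlip (p 4) (u != v) * cfnFlip (p 0) (u != s 0) * cfnFlip (p 1) (u != s 1) *
      cfnFlip (p 2) (v != s 2) * cfnFlip (p 3) (v != s 3)

/-- The Felsenstein-zone flip probabilities: `p_a = p_c = ρ`, `p_b = p_d = p_m = ρ³`. -/
noncomputable def felsP (ρ : ℝ) : Fin 5 → ℝ := ![ρ, ρ ^ 3, ρ, ρ ^ 3, ρ ^ 3]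

/-- `s` assigns the same state to all four leaves. -/
def isConstantPat (s : Fin 4 → Bool) : Prop := ∀ i, s i = s 0

/-- `s` is a singleton pattern on leaf `i`: all other leaves agree and `i` differs. -/
def isSingletonOn (i : Fin 4) (s : Fin 4 → Bool) : Prop :=
  (∀ j k : Fin 4, j ≠ i → k ≠ i → s j = s k) ∧ (∃ j, j ≠ i ∧ s i ≠ s j)

/-- `s` is the split pattern `{a,c} | {b,d}` (leaves `0,2` vs `1,3`). -/
def isACSplit (s : Fin 4 → Bool) : Prop := s 0 = s 2 ∧ s 1 = s 3 ∧ s 0 ≠ s 1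

/-- On the Felsenstein-zone quartet `ab|cd` with `p_a = p_c = ρ`, `p_b = p_d = p_m = ρ³`,
any site pattern other than (i) constant, (ii) a singleton on `a`, (iii) a singleton on
`c`, or (iv) the split `{a,c} | {b,d}`, has probability `O(ρ³)` as `ρ → 0⁺`. -/


lemma cube_factor_bigO (f c : ℝ → ℝ) (hc : Continuous c) (hf : ∀ ρ, f ρ = ρ ^ 3 * c ρ) :
    f =O[nhdsWithin 0 (Set.Ioi 0)] (fun ρ : ℝ => ρ ^ 3) := by
  have h1 : c =O[nhds (0:ℝ)] (fun _ => (1:ℝ)) := (hc.tendsto 0).isBigO_one ℝ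
  have h2 := (isBigO_refl (fun ρ : ℝ => ρ ^ 3) (nhds 0)).mul h1
  simp only [mul_one] at h2
  have hfe : f = fun ρ => ρ ^ 3 * c ρ := funext hf
  rw [hfe]
  exact h2.mono nhdsWithin_le_nhds

theorem stmt_11 (s : Fin 4 → Bool)
    (h : ¬ isConstantPat s ∧ ¬ isSingletonOn 0 s ∧ ¬ isSingletonOn 2 s ∧ ¬ isACSplit s) :
    (fun ρ : ℝ => cfnSiteProb (felsP ρ) s)
      =O[nhdsWithin 0 (Set.Ioi 0)] (fun ρ : ℝ => ρ ^ 3) := by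
  obtain ⟨hcst, hs0, hs2, hac⟩ := h
  rcases Bool.eq_false_or_eq_true (s 0) with h0 | h0
  case inl =>
    rcases Bool.eq_false_or_eq_true (s 1) with h1 | h1
    case inl =>
      rcases Bool.eq_false_or_eq_true (s 2) with h2 | h2
      case inl =>
        rcases Bool.eq_false_or_eq_true (s 3) with h3 | h3
        case inl =>
          exact absurd (fun i => by fin_cases i <;> simp [h0, h1, h2, h3]) hcst
        case inr =>
          exact cube_factor_bigO _ (fun ρ => 1/2 - ρ/2 + ρ^2/2 - ρ^3 + ρ^4 - ρ^5 + ρ^6/2) (by fun_prop)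
                (fun ρ => by simp [cfnSiteProb, felsP, cfnFlip, Fintype.sum_bool, h0, h1, h2, h3]; ring)
      case inr =>
        rcases Bool.eq_false_or_eq_true (s 3) with h3 | h3
        case inl =>
          exact absurd ⟨fun j k hj hk => by fin_cases j <;> fin_cases k <;> simp_all [h0, h1, h3], 1, by decide, by simp [h2, h1]⟩ hs2
        case inr =>
          exact cube_factor_bigO _ (fun ρ => 1/2 - ρ^2/2 - ρ^3 + ρ^5 + ρ^6/2) (by fun_prop)
                (fun ρ => by simp [cfnSiteProb, felsP, cfnFlip, Fintype.sum_bool, h0, h1, h2, h3]; ring)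
    case inr =>
      rcases Bool.eq_false_or_eq_true (s 2) with h2 | h2
      case inl =>
        rcases Bool.eq_false_or_eq_true (s 3) with h3 | h3
        case inl =>
          exact cube_factor_bigO _ (fun ρ => 1/2 - ρ/2 + ρ^2/2 - ρ^3 + ρ^4 - ρ^5 + ρ^6/2) (by fun_prop)
                (fun ρ => by simp [cfnSiteProb, felsP, cfnFlip, Fintype.sum_bool, h0, h1, h2, h3]; ring)
        case inr =>
          exact absurd ⟨by simp [h0, h2], by simp [h1, h3], by simp [h0, h1]⟩ hac
      case inr =>
        rcases Bool.eq_false_or_eq_true (s 3) with h3 | h3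
        case inl =>
          exact cube_factor_bigO _ (fun ρ => ρ - ρ^2/2 - 2*ρ^4 + ρ^5 + ρ^6/2) (by fun_prop)
                (fun ρ => by simp [cfnSiteProb, felsP, cfnFlip, Fintype.sum_bool, h0, h1, h2, h3]; ring)
        case inr =>
          exact absurd ⟨fun j k hj hk => by fin_cases j <;> fin_cases k <;> simp_all [h1, h2, h3], 1, by decide, by simp [h0, h1]⟩ hs0
  case inr =>
    rcases Bool.eq_false_or_eq_true (s 1) with h1 | h1
    case inl =>
      rcases Bool.eq_false_or_eq_true (s 2) with h2 | h2
      case inl =>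
        rcases Bool.eq_false_or_eq_true (s 3) with h3 | h3
        case inl =>
          exact absurd ⟨fun j k hj hk => by fin_cases j <;> fin_cases k <;> simp_all [h1, h2, h3], 1, by decide, by simp [h0, h1]⟩ hs0
        case inr =>
          exact cube_factor_bigO _ (fun ρ => ρ - ρ^2/2 - 2*ρ^4 + ρ^5 + ρ^6/2) (by fun_prop)
                (fun ρ => by simp [cfnSiteProb, felsP, cfnFlip, Fintype.sum_bool, h0, h1, h2, h3]; ring)
      case inr =>
        rcases Bool.eq_false_or_eq_true (s 3) with h3 | h3
        case inl =>
          exact absurd ⟨by simp [h0, h2], by simp [h1, h3], by simp [h0, h1]⟩ hac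
        case inr =>
          exact cube_factor_bigO _ (fun ρ => 1/2 - ρ/2 + ρ^2/2 - ρ^3 + ρ^4 - ρ^5 + ρ^6/2) (by fun_prop)
                (fun ρ => by simp [cfnSiteProb, felsP, cfnFlip, Fintype.sum_bool, h0, h1, h2, h3]; ring)
    case inr =>
      rcases Bool.eq_false_or_eq_true (s 2) with h2 | h2
      case inl =>
        rcases Bool.eq_false_or_eq_true (s 3) with h3 | h3
        case inl =>
          exact cube_factor_bigO _ (fun ρ => 1/2 - ρ^2/2 - ρ^3 + ρ^5 + ρ^6/2) (by fun_prop)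
                (fun ρ => by simp [cfnSiteProb, felsP, cfnFlip, Fintype.sum_bool, h0, h1, h2, h3]; ring)
        case inr =>
          exact absurd ⟨fun j k hj hk => by fin_cases j <;> fin_cases k <;> simp_all [h0, h1, h3], 1, by decide, by simp [h2, h1]⟩ hs2
      case inr =>
        rcases Bool.eq_false_or_eq_true (s 3) with h3 | h3
        case inl =>
          exact cube_factor_bigO _ (fun ρ => 1/2 - ρ/2 + ρ^2/2 - ρ^3 + ρ^4 - ρ^5 + ρ^6/2) (by fun_prop)
                (fun ρ => by simp [cfnSiteProb, felsP, cfnFlip, Fintype.sum_bool, h0, h1, h2, h3]; ring)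
        case inr =>
          exact absurd (fun i => by fin_cases i <;> simp [h0, h1, h2, h3]) hcst
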